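/- Under exchangeability and no ties, for every subset I of the atoms {ℓ/(n+1) : ℓ ∈ [n+1]} and every i ∈ {0,...,m−1}, P(p_{i+1} ∈ I | p_1,...,p_i) = (|I| + N_i(I))/(n+1+i), where N_i(I) = #{k ≤ i : p_k ∈ I}. In particular the indicator sequence Z_i = 1{p_i ∈ I} follows a two-color Pólya urn. -/

import Mathlib

open MeasureTheory ProbabilityTheory

noncomputable def pval {Ω : Type*} (n : ℕ) (S : ℕ → Ω → ℝ) (i : ℕ) (ω : Ω) : ℝ :=
  (1 + ((Finset.range n).filter (fun j => S (n + i) ω ≤ S j ω)).card) / (n + 1)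

def Exchangeable {Ω : Type*} [MeasurableSpace Ω] (P : Measure Ω) (N : ℕ)
    (S : ℕ → Ω → ℝ) : Prop :=
  ∀ σ : Equiv.Perm (Fin N),
    Measure.map (fun ω => fun i : Fin N => S (σ i) ω) P
      = Measure.map (fun ω => fun i : Fin N => S i ω) P

def NoTies {Ω : Type*} [MeasurableSpace Ω] (P : Measure Ω) (N : ℕ)
    (S : ℕ → Ω → ℝ) : Prop :=
  ∀ᵐ ω ∂P, ∀ i < N, ∀ j < N, i ≠ j → S i ω ≠ S j ω

namespace CPG

open Finset Equiv
open scoped ENNReal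

variable {Ω : Type*} [MeasurableSpace Ω]

/-- The event that `τ` lists the first `M` score indices in strictly increasing order. -/
def Eset (S : ℕ → Ω → ℝ) (M : ℕ) (τ : Equiv.Perm (Fin M)) : Set Ω :=
  {ω | ∀ a b : Fin M, a < b → S ((τ a : ℕ)) ω < S ((τ b : ℕ)) ω}

/-- canonical embedding of test index `k` into the index set. -/
def tix (n i : ℕ) (k : Fin i) : Fin (n + i) := ⟨n + (k : ℕ), Nat.add_lt_add_left k.isLt n⟩

def tixM (n i : ℕ) (k : Fin i) : Fin (n + i + 1) :=
  ⟨n + (k : ℕ), by have := k.isLt; omega⟩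

/-- rank-count: number of calibration indices whose rank exceeds that of `c`. -/
def cnt (n : ℕ) {M : ℕ} (ρ : Equiv.Perm (Fin M)) (c : Fin M) : ℕ :=
  (Finset.univ.filter (fun a : Fin M => (a : ℕ) < n ∧ ρ c < ρ a)).card

lemma measurableSet_Eset (S : ℕ → Ω → ℝ) (hS : ∀ i, Measurable (S i)) (M : ℕ)
    (τ : Equiv.Perm (Fin M)) : MeasurableSet (Eset S M τ) := by
  have h : Eset S M τ =
      ⋂ (a : Fin M) (b : Fin M) (_ : a < b), {ω | S ((τ a : ℕ)) ω < S ((τ b : ℕ)) ω} := by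
    ext ω; simp [Eset, Set.mem_iInter]
  rw [h]
  exact MeasurableSet.iInter fun a => MeasurableSet.iInter fun b =>
    MeasurableSet.iInter fun _ => measurableSet_lt (hS _) (hS _)

lemma Eset_lt_iff {S : ℕ → Ω → ℝ} {M : ℕ} {τ : Equiv.Perm (Fin M)} {ω : Ω}
    (hω : ω ∈ Eset S M τ) (c c' : Fin M) :
    S (c : ℕ) ω < S (c' : ℕ) ω ↔ τ.symm c < τ.symm c' := by
  constructor
  · intro h
    rcases lt_trichotomy (τ.symm c) (τ.symm c') with h' | h' | h'
    · exact h'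
    · exfalso; rw [(τ.symm.injective h')] at h; exact lt_irrefl _ h
    · exfalso
      have := hω _ _ h'
      simp only [Equiv.apply_symm_apply] at this
      exact lt_irrefl _ (h.trans this)
  · intro h
    have := hω _ _ h
    simpa using this

lemma strictMono_perm_eq_one {M : ℕ} (π : Equiv.Perm (Fin M))
    (h : StrictMono (π : Fin M → Fin M)) : π = 1 := by
  have hr : Set.range (π : Fin M → Fin M) = Set.range (id : Fin M → Fin M) := by
    simp [π.surjective.range_eq]
  have hid : StrictMono (id : Fin M → Fin M) := strictMono_id
  haveI : WellFoundedLT (Fin M) := Finite.to_wellFoundedLT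
  have := (@StrictMono.range_inj (Fin M) (Fin M) _ _ _ (π : Fin M → Fin M) id h hid).mp hr
  ext a
  have := congrFun this a
  simp only [id_eq] at this
  simp [this]

lemma Eset_disjoint (S : ℕ → Ω → ℝ) (M : ℕ) :
    Set.Pairwise (Set.univ : Set (Equiv.Perm (Fin M)))
      (Function.onFun Disjoint (Eset S M)) := by
  intro τ _ τ' _ hne
  rw [Function.onFun, Set.disjoint_left]
  intro ω hω hω'
  apply hne
  have hsm : StrictMono ((τ'.trans τ.symm : Equiv.Perm (Fin M)) : Fin M → Fin M) := by
    intro a b hab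
    have h1 : S ((τ' a : ℕ)) ω < S ((τ' b : ℕ)) ω := hω' a b hab
    exact (Eset_lt_iff hω _ _).mp h1
  have h1 := strictMono_perm_eq_one _ hsm
  ext a
  have h2 : τ.symm (τ' a) = a := by
    have := congrArg (fun (e : Equiv.Perm (Fin M)) => e a) h1
    simpa using this
  have h3 := congrArg τ h2
  simp only [Equiv.apply_symm_apply] at h3
  exact congrArg Fin.val h3.symm

lemma Eset_cover (S : ℕ → Ω → ℝ) (M : ℕ) (ω : Ω)
    (hinj : ∀ c c' : ℕ, c < M → c' < M → c ≠ c' → S c ω ≠ S c' ω) :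
    ∃ τ : Equiv.Perm (Fin M), ω ∈ Eset S M τ := by
  set f : Fin M → ℝ := fun c => S (c : ℕ) ω with hf
  have hfinj : Function.Injective f := by
    intro a b hab
    by_contra hne
    exact hinj a b a.isLt b.isLt (fun h => hne (Fin.val_injective h)) hab
  refine ⟨Tuple.sort f, ?_⟩
  have hmono : Monotone (f ∘ Tuple.sort f) := Tuple.monotone_sort f
  have hsm : StrictMono (f ∘ Tuple.sort f) :=
    hmono.strictMono_of_injective (hfinj.comp (Tuple.sort f).injective)
  intro a b hab
  exact hsm hab

section MeasureLayer

variable (P : Measure Ω) [IsProbabilityMeasure P] (N : ℕ) (S : ℕ → Ω → ℝ)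

lemma measure_Eset_mul (hS : ∀ i, Measurable (S i)) (hex : Exchangeable P N S)
    (M : ℕ) (hMN : M ≤ N) (π τ : Equiv.Perm (Fin M)) :
    P (Eset S M (π * τ)) = P (Eset S M τ) := by
  classical
  set ι : Fin M ↪ Fin N := (Fin.castLEOrderEmb hMN).toEmbedding with hι
  set πh : Equiv.Perm (Fin N) := π.viaEmbedding ι with hπh
  set B : Set (Fin N → ℝ) := {x | ∀ a b : Fin M, a < b → x (ι (τ a)) < x (ι (τ b))} with hB
  have hBm : MeasurableSet B := by
    have h : B = ⋂ (a : Fin M) (b : Fin M) (_ : a < b),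
        {x : Fin N → ℝ | x (ι (τ a)) < x (ι (τ b))} := by
      ext x; simp [hB, Set.mem_iInter]
    rw [h]
    exact MeasurableSet.iInter fun a => MeasurableSet.iInter fun b =>
      MeasurableSet.iInter fun _ =>
        measurableSet_lt (measurable_pi_apply _) (measurable_pi_apply _)
  have hX : Measurable (fun ω => fun c : Fin N => S (c : ℕ) ω) :=
    measurable_pi_lambda _ fun c => hS _
  have hY : Measurable (fun ω => fun c : Fin N => S ((πh c : ℕ)) ω) :=
    measurable_pi_lambda _ fun c => hS _
  have h1 : P ((fun ω => fun c : Fin N => S ((πh c : ℕ)) ω) ⁻¹' B)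
      = P ((fun ω => fun c : Fin N => S ((c : ℕ)) ω) ⁻¹' B) := by
    rw [← Measure.map_apply hY hBm, ← Measure.map_apply hX hBm, hex πh]
  have hcoe : ∀ x : Fin M, ((ι x : Fin N) : ℕ) = (x : ℕ) := fun x => rfl
  have e1 : (fun ω => fun c : Fin N => S ((c : ℕ)) ω) ⁻¹' B = Eset S M τ := by
    ext ω
    simp only [Set.mem_preimage, hB, Set.mem_setOf_eq, Eset, hcoe]
  have e2 : (fun ω => fun c : Fin N => S ((πh c : ℕ)) ω) ⁻¹' B = Eset S M (π * τ) := by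
    ext ω
    simp only [Set.mem_preimage, hB, Set.mem_setOf_eq, Eset]
    have hv : ∀ x : Fin M, πh (ι x) = ι (π x) := fun x => π.viaEmbedding_apply ι x
    constructor
    · intro h a b hab
      have := h a b hab
      rw [hv, hv, hcoe, hcoe] at this
      simpa using this
    · intro h a b hab
      rw [hv, hv, hcoe, hcoe]
      simpa using h a b hab
  rw [e1, e2] at h1
  exact h1

lemma measure_Eset_eq (hS : ∀ i, Measurable (S i)) (hex : Exchangeable P N S)
    (M : ℕ) (hMN : M ≤ N) (τ τ' : Equiv.Perm (Fin M)) :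
    P (Eset S M τ) = P (Eset S M τ') := by
  have := measure_Eset_mul P N S hS hex M hMN (τ * τ'⁻¹) τ'
  rw [mul_assoc, inv_mul_cancel, mul_one] at this
  exact this

lemma ae_mem_union_Eset (hnt : NoTies P N S) (M : ℕ) (hMN : M ≤ N) :
    ∀ᵐ ω ∂P, ω ∈ ⋃ τ : Equiv.Perm (Fin M), Eset S M τ := by
  filter_upwards [hnt] with ω hω
  obtain ⟨τ, h⟩ := Eset_cover S M ω
    (fun c c' hc hc' hne => hω c (lt_of_lt_of_le hc hMN) c' (lt_of_lt_of_le hc' hMN) hne)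
  exact Set.mem_iUnion.2 ⟨τ, h⟩

lemma measure_Eset_val (hS : ∀ i, Measurable (S i)) (hex : Exchangeable P N S)
    (hnt : NoTies P N S) (M : ℕ) (hMN : M ≤ N) (τ : Equiv.Perm (Fin M)) :
    P (Eset S M τ) = (M.factorial : ℝ≥0∞)⁻¹ := by
  classical
  have hU : MeasurableSet (⋃ τ' : Equiv.Perm (Fin M), Eset S M τ') :=
    MeasurableSet.iUnion fun τ' => measurableSet_Eset S hS M τ'
  have h1 : P (⋃ τ' : Equiv.Perm (Fin M), Eset S M τ') = 1 := by
    rw [← prob_compl_eq_zero_iff hU]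
    have := ae_mem_union_Eset P N S hnt M hMN
    rw [ae_iff] at this
    rw [Set.compl_def]
    exact this
  have h2 : (⋃ τ' : Equiv.Perm (Fin M), Eset S M τ')
      = ⋃ τ' ∈ (Finset.univ : Finset (Equiv.Perm (Fin M))), Eset S M τ' := by
    simp
  rw [h2, measure_biUnion_finset ?hd ?hm] at h1
  case hd => exact fun a _ b _ h => Eset_disjoint S M (Set.mem_univ a) (Set.mem_univ b) h
  case hm => exact fun τ' _ => measurableSet_Eset S hS M τ'
  have h3 : ∀ τ' : Equiv.Perm (Fin M), P (Eset S M τ') = P (Eset S M τ) :=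
    fun τ' => measure_Eset_eq P N S hS hex M hMN τ' τ
  rw [Finset.sum_congr rfl (fun τ' _ => h3 τ'), Finset.sum_const, Finset.card_univ,
    Fintype.card_perm, Fintype.card_fin, nsmul_eq_mul] at h1
  have hf0 : (M.factorial : ℝ≥0∞) ≠ 0 := by
    simp [Nat.factorial_ne_zero]
  have hft : (M.factorial : ℝ≥0∞) ≠ ⊤ := by simp
  calc P (Eset S M τ) = (M.factorial : ℝ≥0∞)⁻¹ * ((M.factorial : ℝ≥0∞) * P (Eset S M τ)) := by
        rw [← mul_assoc, ENNReal.inv_mul_cancel hf0 hft, one_mul]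
    _ = (M.factorial : ℝ≥0∞)⁻¹ := by rw [h1, mul_one]

lemma measure_eq_count (hS : ∀ i, Measurable (S i)) (hex : Exchangeable P N S)
    (hnt : NoTies P N S) (M : ℕ) (hMN : M ≤ N)
    (A : Set Ω) (hA : MeasurableSet A) (q : Equiv.Perm (Fin M) → Prop) [DecidablePred q]
    (hq : ∀ τ : Equiv.Perm (Fin M), ∀ ω ∈ Eset S M τ, (ω ∈ A ↔ q τ)) :
    P A = ((Finset.univ.filter q).card : ℝ≥0∞) * (M.factorial : ℝ≥0∞)⁻¹ := by
  classical
  set U : Set Ω := ⋃ τ' : Equiv.Perm (Fin M), Eset S M τ' with hUdef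
  have hU : MeasurableSet U :=
    MeasurableSet.iUnion fun τ' => measurableSet_Eset S hS M τ'
  have hPA : P A = P (A ∩ U) := by
    have hsplit : P (A ∩ U) + P (A \ U) = P A := measure_inter_add_diff A hU
    have hz : P (A \ U) = 0 := by
      have hc : P Uᶜ = 0 := by
        have := ae_mem_union_Eset P N S hnt M hMN
        rw [ae_iff] at this
        rw [Set.compl_def]
        exact this
      exact measure_mono_null (fun ω hω => hω.2) hc
    rw [← hsplit, hz, add_zero]
  have h2 : A ∩ U = ⋃ τ' ∈ (Finset.univ : Finset (Equiv.Perm (Fin M))), (A ∩ Eset S M τ') := by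
    rw [hUdef, Set.inter_iUnion]
    simp
  have hd : Set.PairwiseDisjoint (↑(Finset.univ : Finset (Equiv.Perm (Fin M))))
      (fun τ' => A ∩ Eset S M τ') := by
    intro x hx y hy hxy
    exact Disjoint.mono Set.inter_subset_right Set.inter_subset_right
      (Eset_disjoint S M (by simp) (by simp) hxy)
  rw [hPA, h2, measure_biUnion_finset hd
    (fun τ' _ => hA.inter (measurableSet_Eset S hS M τ'))]
  have h3 : ∀ τ' : Equiv.Perm (Fin M),
      P (A ∩ Eset S M τ') = if q τ' then (M.factorial : ℝ≥0∞)⁻¹ else 0 := by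
    intro τ'
    by_cases hqτ : q τ'
    · rw [if_pos hqτ]
      have : A ∩ Eset S M τ' = Eset S M τ' := by
        apply Set.inter_eq_self_of_subset_right
        intro ω hω
        exact (hq τ' ω hω).mpr hqτ
      rw [this]
      exact measure_Eset_val P N S hS hex hnt M hMN τ'
    · rw [if_neg hqτ]
      have : A ∩ Eset S M τ' = ∅ := by
        ext ω
        simp only [Set.mem_inter_iff, Set.mem_empty_iff_false, iff_false, not_and]
        intro hωA hωE
        exact hqτ ((hq τ' ω hωE).mp hωA)
      rw [this, measure_empty]
  rw [Finset.sum_congr rfl (fun τ' _ => h3 τ'), Finset.sum_ite, Finset.sum_const,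
    Finset.sum_const_zero, add_zero, nsmul_eq_mul]

end MeasureLayer

section Counting

/-- transfer cardinalities of `Fin`-filters to `range`-filters -/
lemma card_filter_fin_eq (D : ℕ) (Q : ℕ → Prop) [DecidablePred Q] :
    (Finset.univ.filter (fun a : Fin D => Q (a : ℕ))).card
      = ((Finset.range D).filter Q).card := by
  rw [Finset.card_filter, Finset.card_filter,
    Fin.sum_univ_eq_sum_range (fun a => if Q a then 1 else 0)]

lemma card_filter_mem_sum {α : Type*} [DecidableEq α] (s : Finset α) (f : α → ℕ) (I : Finset ℕ) :
    (s.filter (fun x => f x ∈ I)).card = ∑ ℓ ∈ I, (s.filter (fun x => f x = ℓ)).card := by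
  have h := Finset.card_eq_sum_card_fiberwise
    (s := s.filter (fun x => f x ∈ I)) (t := I) (f := f)
    (fun x hx => (Finset.mem_filter.mp hx).2)
  rw [h]
  refine Finset.sum_congr rfl fun ℓ hℓ => ?_
  congr 1
  rw [Finset.filter_filter]
  refine Finset.filter_congr fun x _ => ?_
  constructor
  · exact fun h => h.2
  · exact fun h => ⟨by rw [h]; exact hℓ, h⟩

variable (n i : ℕ)

/-- order-preserving insertion decomposition of a permutation of `Fin (D+1)`. -/
def phi {D : ℕ} (p : Fin (D + 1)) (τ : Equiv.Perm (Fin D)) : Equiv.Perm (Fin (D + 1)) :=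
  (finSuccEquiv' (Fin.last D)).trans (τ.optionCongr.trans (finSuccEquiv' p).symm)

lemma phi_last {D : ℕ} (p : Fin (D + 1)) (τ : Equiv.Perm (Fin D)) :
    phi p τ (Fin.last D) = p := by
  simp [phi, finSuccEquiv'_at, finSuccEquiv'_symm_none]

lemma phi_castSucc {D : ℕ} (p : Fin (D + 1)) (τ : Equiv.Perm (Fin D)) (a : Fin D) :
    phi p τ a.castSucc = p.succAbove (τ a) := by
  have h1 : (finSuccEquiv' (Fin.last D)) a.castSucc = some a := by
    rw [← Fin.succAbove_last, finSuccEquiv'_succAbove]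
  simp [phi, h1, finSuccEquiv'_symm_some]

lemma phi_bijective {D : ℕ} :
    Function.Bijective (fun pt : Fin (D + 1) × Equiv.Perm (Fin D) => phi pt.1 pt.2) := by
  rw [Fintype.bijective_iff_injective_and_card]
  constructor
  · rintro ⟨p, τ⟩ ⟨p', τ'⟩ h
    simp only at h
    have hp : p = p' := by rw [← phi_last p τ, ← phi_last p' τ', h]
    subst hp
    have hτ : τ = τ' := by
      ext a
      have h1 : phi p τ a.castSucc = phi p τ' a.castSucc := by rw [h]
      rw [phi_castSucc, phi_castSucc] at h1
      exact congrArg Fin.val (p.succAbove_right_injective h1)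
    rw [hτ]
  · simp [Fintype.card_perm, Nat.factorial_succ]

lemma cnt_phi_castSucc {D : ℕ} (p : Fin (D + 1)) (τ : Equiv.Perm (Fin D)) (c : Fin D)
    (hn : n ≤ D) :
    cnt n (phi p τ) c.castSucc = cnt n τ c := by
  unfold cnt
  rw [Finset.card_filter, Finset.card_filter, Fin.sum_univ_castSucc]
  have hlast : (if ((Fin.last D : Fin (D+1)) : ℕ) < n ∧
      phi p τ c.castSucc < phi p τ (Fin.last D) then 1 else 0) = 0 := by
    simp only [Fin.val_last]
    have : ¬ (D < n ∧ phi p τ c.castSucc < phi p τ (Fin.last D)) := by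
      rintro ⟨h1, -⟩; omega
    simp [this]
  rw [hlast, add_zero]
  refine Finset.sum_congr rfl fun a _ => ?_
  congr 1
  rw [phi_castSucc, phi_castSucc]
  simp only [Fin.coe_castSucc]
  rw [Fin.succAbove_lt_succAbove_iff]

def gcnt {D : ℕ} (p : Fin (D + 1)) (τ : Equiv.Perm (Fin D)) : ℕ :=
  (Finset.univ.filter (fun a : Fin D => (a : ℕ) < n ∧ (p : ℕ) ≤ ((τ a : Fin D) : ℕ))).card

lemma cnt_phi_last {D : ℕ} (p : Fin (D + 1)) (τ : Equiv.Perm (Fin D)) (hn : n ≤ D) :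
    cnt n (phi p τ) (Fin.last D) = gcnt n p τ := by
  unfold cnt gcnt
  rw [Finset.card_filter, Finset.card_filter, Fin.sum_univ_castSucc]
  have hlast : (if ((Fin.last D : Fin (D+1)) : ℕ) < n ∧
      phi p τ (Fin.last D) < phi p τ (Fin.last D) then 1 else 0) = 0 := by
    simp
  rw [hlast, add_zero]
  refine Finset.sum_congr rfl fun a _ => ?_
  congr 1
  rw [phi_last, phi_castSucc]
  simp only [Fin.coe_castSucc]
  have : p < p.succAbove (τ a) ↔ (p : ℕ) ≤ ((τ a : Fin D) : ℕ) := by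
    rw [Fin.lt_succAbove_iff_le_castSucc, Fin.le_def, Fin.coe_castSucc]
  rw [this]

end Counting

section Hlayer

variable (n i : ℕ) (τ : Equiv.Perm (Fin (n + i)))

def Hfun (p : ℕ) : ℕ :=
  (Finset.univ.filter (fun a : Fin (n + i) => (a : ℕ) < n ∧ p ≤ ((τ a : Fin (n + i)) : ℕ))).card

def calS : Finset ℕ :=
  (Finset.univ.filter (fun a : Fin (n + i) => (a : ℕ) < n)).image (fun a => ((τ a : Fin (n + i)) : ℕ))

lemma gcnt_eq_H (p : Fin (n + i + 1)) : gcnt n p τ = Hfun n i τ (p : ℕ) := rfl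

lemma H_zero : Hfun n i τ 0 = n := by
  unfold Hfun
  have h1 : (Finset.univ.filter (fun a : Fin (n + i) =>
      (a : ℕ) < n ∧ 0 ≤ ((τ a : Fin (n + i)) : ℕ))).card
      = (Finset.univ.filter (fun a : Fin (n + i) => (a : ℕ) < n)).card := by
    congr 1
    refine Finset.filter_congr fun a _ => ?_
    simp
  rw [h1, card_filter_fin_eq (n + i) (fun a => a < n)]
  have h2 : (Finset.range (n + i)).filter (fun a => a < n) = Finset.range n := by
    ext a
    simp only [Finset.mem_filter, Finset.mem_range]
    omega
  rw [h2, Finset.card_range]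

lemma H_top (p : ℕ) (hp : n + i ≤ p) : Hfun n i τ p = 0 := by
  unfold Hfun
  rw [Finset.card_eq_zero]
  rw [Finset.filter_eq_empty_iff]
  rintro a - ⟨-, h2⟩
  have := (τ a).isLt
  omega

lemma H_step (p : ℕ) :
    Hfun n i τ p = Hfun n i τ (p + 1) + (if p ∈ calS n i τ then 1 else 0) := by
  classical
  unfold Hfun
  have hsplit : ∀ a : Fin (n + i),
      (if (a : ℕ) < n ∧ p ≤ ((τ a : Fin (n+i)) : ℕ) then 1 else 0)
        = (if (a : ℕ) < n ∧ p + 1 ≤ ((τ a : Fin (n+i)) : ℕ) then 1 else 0)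
          + (if (a : ℕ) < n ∧ ((τ a : Fin (n+i)) : ℕ) = p then 1 else 0) := by
    intro a
    split_ifs <;> omega
  rw [Finset.card_filter, Finset.card_filter]
  rw [Finset.sum_congr rfl (fun a _ => hsplit a), Finset.sum_add_distrib]
  congr 1
  rw [← Finset.card_filter]
  by_cases hp : p ∈ calS n i τ
  · rw [if_pos hp]
    obtain ⟨a0, ha0, ha0v⟩ := Finset.mem_image.mp hp
    have ha0n : (a0 : ℕ) < n := (Finset.mem_filter.mp ha0).2
    have : (Finset.univ.filter (fun a : Fin (n+i) =>
        (a : ℕ) < n ∧ ((τ a : Fin (n+i)) : ℕ) = p)) = {a0} := by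
      ext a
      simp only [Finset.mem_filter, Finset.mem_univ, true_and, Finset.mem_singleton]
      constructor
      · rintro ⟨h1, h2⟩
        have : τ a = τ a0 := Fin.val_injective (by rw [h2, ha0v])
        exact τ.injective this
      · rintro rfl
        exact ⟨ha0n, ha0v⟩
    rw [this, Finset.card_singleton]
  · rw [if_neg hp]
    rw [Finset.card_eq_zero, Finset.filter_eq_empty_iff]
    rintro a - ⟨h1, h2⟩
    exact hp (Finset.mem_image.mpr ⟨a, Finset.mem_filter.mpr ⟨Finset.mem_univ a, h1⟩, h2⟩)

lemma H_antitone : Antitone (Hfun n i τ) := by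
  apply antitone_nat_of_succ_le
  intro p
  rw [H_step n i τ p]
  exact Nat.le_add_right _ _

lemma H_succ_lower (p : ℕ) : Hfun n i τ p ≤ Hfun n i τ (p + 1) + 1 := by
  rw [H_step n i τ p]
  split <;> omega

lemma H_notcal (p : ℕ) (hp : p ∉ calS n i τ) : Hfun n i τ p = Hfun n i τ (p + 1) := by
  rw [H_step n i τ p, if_neg hp, add_zero]

lemma H_cal (p : ℕ) (hp : p ∈ calS n i τ) : Hfun n i τ p = Hfun n i τ (p + 1) + 1 := by
  rw [H_step n i τ p, if_pos hp]

lemma cnt_eq_H (b : Fin (n + i)) :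
    cnt n τ b = Hfun n i τ (((τ b : Fin (n+i)) : ℕ) + 1) := by
  unfold cnt Hfun
  apply congrArg Finset.card
  refine Finset.filter_congr fun a _ => ?_
  simp only [Fin.lt_def]
  omega

/-- the core fiber count: the number of insertion positions producing p-value level `ℓ`. -/
lemma card_fiber (ℓ : ℕ) (hℓ1 : 1 ≤ ℓ) (hℓ2 : ℓ ≤ n + 1) (j : Fin i → ℕ)
    (hpast : ∀ k : Fin i, 1 + cnt n τ (tix n i k) = j k) :
    (Finset.univ.filter (fun p : Fin (n + i + 1) => 1 + gcnt n p τ = ℓ)).card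
      = 1 + (Finset.univ.filter (fun k : Fin i => j k = ℓ)).card := by
  classical
  set c := ℓ - 1 with hc
  -- convert to a range filter
  have hconv : (Finset.univ.filter (fun p : Fin (n + i + 1) => 1 + gcnt n p τ = ℓ)).card
      = ((Finset.range (n + i + 1)).filter (fun p => Hfun n i τ p = c)).card := by
    have e1 : ∀ p : Fin (n + i + 1), (1 + gcnt n p τ = ℓ) ↔ (Hfun n i τ (p : ℕ) = c) := by
      intro p
      rw [gcnt_eq_H]
      omega
    rw [Finset.filter_congr (fun p _ => by rw [e1 p]),
      card_filter_fin_eq (n + i + 1) (fun p => Hfun n i τ p = c)]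
  rw [hconv]
  -- the maximal element with H p = c
  have h0F : (0 : ℕ) ∈ (Finset.range (n + i + 1)).filter (fun p => c ≤ Hfun n i τ p) := by
    refine Finset.mem_filter.mpr ⟨by simp, ?_⟩
    rw [H_zero]
    omega
  set F := (Finset.range (n + i + 1)).filter (fun p => c ≤ Hfun n i τ p) with hF
  have hFne : F.Nonempty := ⟨0, h0F⟩
  set pm := F.max' hFne with hpm
  have hpmF : pm ∈ F := F.max'_mem hFne
  have hpm_range : pm < n + i + 1 := Finset.mem_range.mp (Finset.mem_filter.mp hpmF).1
  have hpm_le : c ≤ Hfun n i τ pm := (Finset.mem_filter.mp hpmF).2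
  have hpm_eq : Hfun n i τ pm = c := by
    by_contra hne
    have hlt : c < Hfun n i τ pm := lt_of_le_of_ne hpm_le (Ne.symm hne)
    have hpm_lt : pm < n + i := by
      rcases Nat.lt_or_ge pm (n + i) with h | h
      · exact h
      · exfalso
        have : Hfun n i τ pm = 0 := H_top n i τ pm h
        omega
    have hnext : pm + 1 ∈ F := by
      refine Finset.mem_filter.mpr ⟨Finset.mem_range.mpr (by omega), ?_⟩
      have := H_succ_lower n i τ pm
      omega
    have := F.le_max' _ hnext
    omega
  have hmax : ∀ p, p < n + i + 1 → Hfun n i τ p = c → p ≤ pm := by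
    intro p hp hpc
    exact F.le_max' p (Finset.mem_filter.mpr ⟨Finset.mem_range.mpr hp, le_of_eq hpc.symm⟩)
  set A' := (Finset.range (n + i + 1)).filter (fun p => Hfun n i τ p = c) with hA'
  have hpmA : pm ∈ A' := Finset.mem_filter.mpr ⟨Finset.mem_range.mpr hpm_range, hpm_eq⟩
  set K' := (Finset.range (n + i)).filter
    (fun q => q ∉ calS n i τ ∧ Hfun n i τ (q + 1) = c) with hK'
  have herase : A'.erase pm = K' := by
    ext p
    simp only [hA', hK', Finset.mem_erase, Finset.mem_filter, Finset.mem_range]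
    constructor
    · rintro ⟨hne, hp, hpc⟩
      have hple : p ≤ pm := hmax p hp hpc
      have hplt : p < pm := lt_of_le_of_ne hple hne
      have h1 : p < n + i := by omega
      have h2 : Hfun n i τ (p + 1) = c := by
        have ha : Hfun n i τ (p + 1) ≤ Hfun n i τ p := H_antitone n i τ (Nat.le_succ p)
        have hb : Hfun n i τ pm ≤ Hfun n i τ (p + 1) := H_antitone n i τ (by omega)
        omega
      have h3 : p ∉ calS n i τ := by
        intro hcal
        have := H_cal n i τ p hcal
        omega
      exact ⟨h1, h3, h2⟩
    · rintro ⟨hp, hcal, hpc⟩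
      have h1 : Hfun n i τ p = c := by rw [H_notcal n i τ p hcal]; exact hpc
      have h2 : p + 1 ∈ F := Finset.mem_filter.mpr
        ⟨Finset.mem_range.mpr (by omega), le_of_eq hpc.symm⟩
      have h3 : p + 1 ≤ pm := F.le_max' _ h2
      exact ⟨by omega, by omega, h1⟩
  have hcardA : A'.card = K'.card + 1 := by
    have h1 := Finset.card_erase_of_mem hpmA
    have h2 : 1 ≤ A'.card := Finset.card_pos.mpr ⟨pm, hpmA⟩
    rw [herase] at h1
    omega
  rw [hcardA]
  -- identify K' with the test points at level ℓ
  have hK : K'.card = (Finset.univ.filter (fun k : Fin i => j k = ℓ)).card := by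
    symm
    apply Finset.card_bij (fun (k : Fin i) _ => ((τ (tix n i k) : Fin (n+i)) : ℕ))
    · intro k hk
      have hjk : j k = ℓ := (Finset.mem_filter.mp hk).2
      refine Finset.mem_filter.mpr
        ⟨Finset.mem_range.mpr (τ (tix n i k)).isLt, ?_, ?_⟩
      · intro hcal
        obtain ⟨a, ha, hav⟩ := Finset.mem_image.mp hcal
        have han : (a : ℕ) < n := (Finset.mem_filter.mp ha).2
        have h5 : a = tix n i k := τ.injective (Fin.val_injective hav)
        rw [h5] at han
        simp only [tix] at han
        omega
      · have := hpast k
        rw [cnt_eq_H] at this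
        omega
    · intro k1 hk1 k2 hk2 heq
      have h5 : tix n i k1 = tix n i k2 := τ.injective (Fin.val_injective heq)
      have h6 := congrArg Fin.val h5
      simp only [tix] at h6
      exact Fin.val_injective (by omega)
    · intro q hq
      obtain ⟨hq1, hq2, hq3⟩ := Finset.mem_filter.mp hq
      rw [Finset.mem_range] at hq1
      set b : Fin (n + i) := τ.symm ⟨q, hq1⟩ with hb
      have hbv : ((τ b : Fin (n+i)) : ℕ) = q := by
        rw [hb, Equiv.apply_symm_apply]
      have hbn : ¬ ((b : ℕ) < n) := by
        intro hbn
        exact hq2 (Finset.mem_image.mpr ⟨b,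
          Finset.mem_filter.mpr ⟨Finset.mem_univ b, hbn⟩, hbv⟩)
      have hblt : (b : ℕ) < n + i := b.isLt
      set k0 : Fin i := ⟨(b : ℕ) - n, by omega⟩ with hk0
      have hbeq : tix n i k0 = b := by
        apply Fin.val_injective
        simp only [tix, hk0]
        omega
      have hcnt0 : 1 + Hfun n i τ (q + 1) = j k0 := by
        have := hpast k0
        rw [cnt_eq_H, hbeq, hbv] at this
        exact this
      refine ⟨k0, ?_, ?_⟩
      · refine Finset.mem_filter.mpr ⟨Finset.mem_univ _, ?_⟩
        omega
      · rw [hbeq, hbv]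
  rw [hK]
  omega

end Hlayer

section Assemble

variable (n i : ℕ)

lemma card_fiber_I (τ : Equiv.Perm (Fin (n + i))) (I : Finset ℕ)
    (hI : I ⊆ Finset.Icc 1 (n + 1)) (j : Fin i → ℕ)
    (hpast : ∀ k : Fin i, 1 + cnt n τ (tix n i k) = j k) :
    (Finset.univ.filter (fun p : Fin (n + i + 1) => (1 + gcnt n p τ) ∈ I)).card
      = I.card + (Finset.univ.filter (fun k : Fin i => j k ∈ I)).card := by
  classical
  rw [card_filter_mem_sum Finset.univ (fun p : Fin (n+i+1) => 1 + gcnt n p τ) I]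
  have h1 : ∀ ℓ ∈ I,
      (Finset.univ.filter (fun p : Fin (n + i + 1) => 1 + gcnt n p τ = ℓ)).card
        = 1 + (Finset.univ.filter (fun k : Fin i => j k = ℓ)).card := by
    intro ℓ hℓ
    have h2 := Finset.mem_Icc.mp (hI hℓ)
    exact card_fiber n i τ ℓ h2.1 h2.2 j hpast
  rw [Finset.sum_congr rfl h1, Finset.sum_add_distrib, Finset.sum_const, smul_eq_mul, mul_one]
  congr 1
  exact (card_filter_mem_sum Finset.univ (fun k : Fin i => j k) I).symm

lemma tixM_eq_castSucc (k : Fin i) : tixM n i k = (tix n i k).castSucc := rfl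

def pastQ (j : Fin i → ℕ) (τ : Equiv.Perm (Fin (n + i))) : Prop :=
  ∀ k : Fin i, 1 + cnt n τ (tix n i k) = j k

instance (j : Fin i → ℕ) : DecidablePred (pastQ n i j) := fun τ =>
  inferInstanceAs (Decidable (∀ k : Fin i, 1 + cnt n τ (tix n i k) = j k))

lemma pastP_phi (j : Fin i → ℕ) (p : Fin (n + i + 1)) (τ : Equiv.Perm (Fin (n + i))) :
    (∀ k : Fin i, 1 + cnt n (phi p τ) (tixM n i k) = j k) ↔ pastQ n i j τ := by
  unfold pastQ
  refine forall_congr' fun k => ?_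
  rw [tixM_eq_castSucc, cnt_phi_castSucc n p τ (tix n i k) (Nat.le_add_right n i)]

lemma count_past (j : Fin i → ℕ) :
    (Finset.univ.filter
      (fun ρ : Equiv.Perm (Fin (n + i + 1)) =>
        ∀ k : Fin i, 1 + cnt n ρ (tixM n i k) = j k)).card
    = (n + i + 1) *
      (Finset.univ.filter (pastQ n i j)).card := by
  classical
  rw [Finset.card_filter]
  rw [← Fintype.sum_bijective _ (phi_bijective (D := n + i))
    (fun pt => if (∀ k : Fin i, 1 + cnt n (phi pt.1 pt.2) (tixM n i k) = j k) then 1 else 0)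
    (fun ρ => if (∀ k : Fin i, 1 + cnt n ρ (tixM n i k) = j k) then 1 else 0)
    (fun pt => rfl)]
  rw [Fintype.sum_prod_type_right]
  have h1 : ∀ τ : Equiv.Perm (Fin (n + i)),
      (∑ p : Fin (n + i + 1),
        if (∀ k : Fin i, 1 + cnt n (phi p τ) (tixM n i k) = j k) then 1 else 0)
      = (n + i + 1) * (if pastQ n i j τ then 1 else 0) := by
    intro τ
    have h2 : ∀ p : Fin (n + i + 1),
        (if (∀ k : Fin i, 1 + cnt n (phi p τ) (tixM n i k) = j k) then (1:ℕ) else 0)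
          = (if pastQ n i j τ then 1 else 0) := by
      intro p
      congr 1
      simp only [eq_iff_iff]
      exact pastP_phi n i j p τ
    rw [Finset.sum_congr rfl (fun p _ => h2 p), Finset.sum_const, Finset.card_univ,
      Fintype.card_fin, smul_eq_mul]
  rw [Finset.sum_congr rfl (fun τ _ => h1 τ), ← Finset.mul_sum]
  congr 1
  rw [Finset.card_filter]

lemma count_full (j : Fin i → ℕ) (I : Finset ℕ) (hI : I ⊆ Finset.Icc 1 (n + 1)) :
    (Finset.univ.filter
      (fun ρ : Equiv.Perm (Fin (n + i + 1)) =>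
        (∀ k : Fin i, 1 + cnt n ρ (tixM n i k) = j k)
          ∧ (1 + cnt n ρ (Fin.last (n + i))) ∈ I)).card
    = (I.card + (Finset.univ.filter (fun k : Fin i => j k ∈ I)).card) *
      (Finset.univ.filter (pastQ n i j)).card := by
  classical
  rw [Finset.card_filter]
  rw [← Fintype.sum_bijective _ (phi_bijective (D := n + i))
    (fun pt => if ((∀ k : Fin i, 1 + cnt n (phi pt.1 pt.2) (tixM n i k) = j k)
        ∧ (1 + cnt n (phi pt.1 pt.2) (Fin.last (n + i))) ∈ I) then 1 else 0)
    (fun ρ => if ((∀ k : Fin i, 1 + cnt n ρ (tixM n i k) = j k)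
        ∧ (1 + cnt n ρ (Fin.last (n + i))) ∈ I) then 1 else 0)
    (fun pt => rfl)]
  rw [Fintype.sum_prod_type_right]
  have h1 : ∀ τ : Equiv.Perm (Fin (n + i)),
      (∑ p : Fin (n + i + 1),
        if ((∀ k : Fin i, 1 + cnt n (phi p τ) (tixM n i k) = j k)
          ∧ (1 + cnt n (phi p τ) (Fin.last (n + i))) ∈ I) then 1 else 0)
      = (if pastQ n i j τ then
          (I.card + (Finset.univ.filter (fun k : Fin i => j k ∈ I)).card) else 0) := by
    intro τ
    have h2 : ∀ p : Fin (n + i + 1),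
        (if ((∀ k : Fin i, 1 + cnt n (phi p τ) (tixM n i k) = j k)
          ∧ (1 + cnt n (phi p τ) (Fin.last (n + i))) ∈ I) then (1:ℕ) else 0)
          = (if (pastQ n i j τ ∧ (1 + gcnt n p τ) ∈ I) then 1 else 0) := by
      intro p
      congr 1
      simp only [eq_iff_iff]
      rw [pastP_phi n i j p τ, cnt_phi_last n p τ (Nat.le_add_right n i)]
    rw [Finset.sum_congr rfl (fun p _ => h2 p)]
    by_cases hτ : pastQ n i j τ
    · have h3 : ∀ p : Fin (n + i + 1),
          (if (pastQ n i j τ ∧ (1 + gcnt n p τ) ∈ I) then (1:ℕ) else 0)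
            = (if (1 + gcnt n p τ) ∈ I then 1 else 0) := by
        intro p
        by_cases hp : (1 + gcnt n p τ) ∈ I
        · rw [if_pos ⟨hτ, hp⟩, if_pos hp]
        · rw [if_neg (by tauto), if_neg hp]
      rw [Finset.sum_congr rfl (fun p _ => h3 p), ← Finset.card_filter, if_pos hτ]
      exact card_fiber_I n i τ I hI j hτ
    · have h3 : ∀ p : Fin (n + i + 1),
          (if (pastQ n i j τ ∧ (1 + gcnt n p τ) ∈ I) then (1:ℕ) else 0) = 0 := by
        intro p
        rw [if_neg (by tauto)]
      rw [Finset.sum_congr rfl (fun p _ => h3 p), Finset.sum_const_zero, if_neg hτ]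
  rw [Finset.sum_congr rfl (fun τ _ => h1 τ)]
  rw [Finset.sum_ite, Finset.sum_const, Finset.sum_const_zero, add_zero, smul_eq_mul,
    mul_comm, Finset.card_filter]

/-- reindexing a filter over permutations by `symm`. -/
lemma card_filter_symm {M : ℕ} (Q : Equiv.Perm (Fin M) → Prop) [DecidablePred Q] :
    (Finset.univ.filter (fun τ : Equiv.Perm (Fin M) => Q τ.symm)).card
      = (Finset.univ.filter Q).card := by
  apply Finset.card_bij (fun τ _ => τ.symm)
  · intro τ hτ
    exact Finset.mem_filter.mpr ⟨Finset.mem_univ _, (Finset.mem_filter.mp hτ).2⟩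
  · intro τ1 h1 τ2 h2 heq
    have := congrArg Equiv.symm heq
    simpa using this
  · intro ρ hρ
    refine ⟨ρ.symm, Finset.mem_filter.mpr ⟨Finset.mem_univ _, ?_⟩, by simp⟩
    simpa using (Finset.mem_filter.mp hρ).2

end Assemble

section PvalLayer

lemma Eset_inj {S : ℕ → Ω → ℝ} {M : ℕ} {τ : Equiv.Perm (Fin M)} {ω : Ω}
    (hω : ω ∈ Eset S M τ) {c c' : Fin M} (h : S (c : ℕ) ω = S (c' : ℕ) ω) : c = c' := by
  have h1 := Eset_lt_iff hω c c'
  have h2 := Eset_lt_iff hω c' c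
  have h3 : τ.symm c = τ.symm c' := by
    rcases lt_trichotomy (τ.symm c) (τ.symm c') with hl | he | hg
    · exact absurd h (ne_of_lt (h1.mpr hl))
    · exact he
    · exact absurd h.symm (ne_of_lt (h2.mpr hg))
  exact τ.symm.injective h3

lemma pval_card_on_Eset {S : ℕ → Ω → ℝ} {M : ℕ} {τ : Equiv.Perm (Fin M)} {ω : Ω}
    (hω : ω ∈ Eset S M τ) {n k : ℕ} (hn : n ≤ M) (hk : n + k < M) :
    ((Finset.range n).filter (fun a => S (n + k) ω ≤ S a ω)).card
      = cnt n τ.symm (⟨n + k, hk⟩ : Fin M) := by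
  classical
  have key : ∀ a : ℕ, (ha : a < n) →
      (S (n + k) ω ≤ S a ω ↔
        τ.symm (⟨n + k, hk⟩ : Fin M) < τ.symm (⟨a, lt_of_lt_of_le ha hn⟩ : Fin M)) := by
    intro a ha
    have hne : (⟨n + k, hk⟩ : Fin M) ≠ (⟨a, lt_of_lt_of_le ha hn⟩ : Fin M) := by
      intro h
      have := congrArg Fin.val h
      simp only at this
      omega
    constructor
    · intro hle
      rcases lt_or_eq_of_le hle with hlt | heq
      · exact (Eset_lt_iff hω (⟨n + k, hk⟩ : Fin M) (⟨a, lt_of_lt_of_le ha hn⟩ : Fin M)).mp hlt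
      · exact absurd (Eset_inj hω heq) hne
    · intro hlt
      exact le_of_lt ((Eset_lt_iff hω (⟨n + k, hk⟩ : Fin M)
        (⟨a, lt_of_lt_of_le ha hn⟩ : Fin M)).mpr hlt)
  unfold cnt
  apply Finset.card_bij (fun (a : ℕ) (ha : a ∈ (Finset.range n).filter
    (fun a => S (n + k) ω ≤ S a ω)) =>
      (⟨a, lt_of_lt_of_le (Finset.mem_range.mp (Finset.mem_filter.mp ha).1) hn⟩ : Fin M))
  · intro a ha
    obtain ⟨ha1, ha2⟩ := Finset.mem_filter.mp ha
    have ha1' := Finset.mem_range.mp ha1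
    refine Finset.mem_filter.mpr ⟨Finset.mem_univ _, ha1', ?_⟩
    exact (key a ha1').mp ha2
  · intro a1 h1 a2 h2 heq
    exact congrArg Fin.val heq
  · intro b hb
    obtain ⟨-, hb1, hb2⟩ := Finset.mem_filter.mp hb
    refine ⟨(b : ℕ), Finset.mem_filter.mpr ⟨Finset.mem_range.mpr hb1, ?_⟩, ?_⟩
    · refine (key (b : ℕ) hb1).mpr ?_
      have : (⟨(b : ℕ), lt_of_lt_of_le hb1 hn⟩ : Fin M) = b := by
        apply Fin.val_injective; rfl
      rw [this]
      exact hb2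
    · apply Fin.val_injective; rfl

lemma pval_cond {S : ℕ → Ω → ℝ} {M : ℕ} {τ : Equiv.Perm (Fin M)} {ω : Ω}
    (hω : ω ∈ Eset S M τ) {n k : ℕ} (hn : n ≤ M) (hk : n + k < M) (v : ℕ) :
    (pval n S k ω = (v : ℝ) / (n + 1)) ↔ 1 + cnt n τ.symm (⟨n + k, hk⟩ : Fin M) = v := by
  unfold pval
  rw [pval_card_on_Eset hω hn hk]
  have hden : ((n : ℝ) + 1) ≠ 0 := by positivity
  constructor
  · intro h
    have h2 : (1 + (cnt n τ.symm (⟨n + k, hk⟩ : Fin M) : ℝ)) = (v : ℝ) := by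
      have h3 := congrArg (fun x : ℝ => x * ((n : ℝ) + 1)) h
      simpa [div_mul_cancel₀, hden] using h3
    exact_mod_cast h2
  · intro h
    rw [← h]
    push_cast
    ring

lemma measurable_pval (n : ℕ) (S : ℕ → Ω → ℝ) (hS : ∀ a, Measurable (S a)) (k : ℕ) :
    Measurable (pval n S k) := by
  have hfun : pval n S k = fun ω =>
      (1 + ∑ a ∈ Finset.range n, if S (n + k) ω ≤ S a ω then (1 : ℝ) else 0) / (n + 1) := by
    funext ω
    unfold pval
    congr 1
    rw [Finset.card_filter]
    push_cast
    rfl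
  rw [hfun]
  apply Measurable.div_const
  apply Measurable.add measurable_const
  apply Finset.measurable_sum
  intro a _
  exact Measurable.ite (measurableSet_le (hS _) (hS _)) measurable_const measurable_const

end PvalLayer

end CPG





theorem conformal_polya_grouping
    {Ω : Type*} [MeasurableSpace Ω] (P : Measure Ω) [IsProbabilityMeasure P]
    (n m : ℕ) (S : ℕ → Ω → ℝ)
    (hS : ∀ i, Measurable (S i))
    (hex : Exchangeable P (n + m) S) (hnt : NoTies P (n + m) S)
    (I : Finset ℕ) (hI : I ⊆ Finset.Icc 1 (n + 1))
    (i : ℕ) (hi : i < m)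
    (j : Fin i → ℕ) (hj : ∀ k, j k ∈ Finset.Icc 1 (n + 1)) :
    (P ({ω | ∃ ℓ ∈ I, pval n S i ω = (ℓ : ℝ) / (n + 1)}
        ∩ {ω | ∀ k : Fin i, pval n S k ω = (j k : ℝ) / (n + 1)})).toReal
      = (((I.card : ℝ) + ((Finset.univ.filter (fun k : Fin i => j k ∈ I)).card : ℝ))
          / (n + 1 + i))
        * (P {ω | ∀ k : Fin i, pval n S k ω = (j k : ℝ) / (n + 1)}).toReal := by
  classical
  have hMN : n + i + 1 ≤ n + m := by omega
  have hn_le : n ≤ n + i + 1 := by omega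
  have hmeas_p : ∀ k : ℕ, Measurable (pval n S k) := CPG.measurable_pval n S hS
  have hApastm : MeasurableSet {ω : Ω | ∀ k : Fin i, pval n S k ω = (j k : ℝ) / (n + 1)} := by
    have h : {ω : Ω | ∀ k : Fin i, pval n S k ω = (j k : ℝ) / (n + 1)}
        = ⋂ k : Fin i, (pval n S (k : ℕ)) ⁻¹' {((j k : ℝ) / (n + 1))} := by
      ext ω; simp
    rw [h]
    exact MeasurableSet.iInter fun k => (hmeas_p k) (measurableSet_singleton _)
  have hAexm : MeasurableSet {ω : Ω | ∃ ℓ ∈ I, pval n S i ω = (ℓ : ℝ) / (n + 1)} := by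
    have h : {ω : Ω | ∃ ℓ ∈ I, pval n S i ω = (ℓ : ℝ) / (n + 1)}
        = ⋃ ℓ ∈ I, (pval n S i) ⁻¹' {((ℓ : ℝ) / (n + 1))} := by
      ext ω; simp
    rw [h]
    exact MeasurableSet.biUnion I.countable_toSet fun ℓ _ =>
      (hmeas_p i) (measurableSet_singleton _)
  let qp : Equiv.Perm (Fin (n + i + 1)) → Prop :=
    fun τ => ∀ k : Fin i, 1 + CPG.cnt n τ.symm (CPG.tixM n i k) = j k
  let qf : Equiv.Perm (Fin (n + i + 1)) → Prop :=
    fun τ => (∀ k : Fin i, 1 + CPG.cnt n τ.symm (CPG.tixM n i k) = j k)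
      ∧ (1 + CPG.cnt n τ.symm (Fin.last (n + i))) ∈ I
  have hdet_p : ∀ τ : Equiv.Perm (Fin (n + i + 1)), ∀ ω ∈ CPG.Eset S (n + i + 1) τ,
      (ω ∈ {ω : Ω | ∀ k : Fin i, pval n S k ω = (j k : ℝ) / (n + 1)} ↔ qp τ) := by
    intro τ ω hω
    simp only [Set.mem_setOf_eq, qp]
    refine forall_congr' fun k => ?_
    have hk : n + (k : ℕ) < n + i + 1 := by have := k.isLt; omega
    exact CPG.pval_cond hω hn_le hk (j k)
  have hki : n + i < n + i + 1 := by omega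
  have hlast : (Fin.last (n + i)) = (⟨n + i, hki⟩ : Fin (n + i + 1)) := rfl
  have hdet_f : ∀ τ : Equiv.Perm (Fin (n + i + 1)), ∀ ω ∈ CPG.Eset S (n + i + 1) τ,
      (ω ∈ ({ω : Ω | ∃ ℓ ∈ I, pval n S i ω = (ℓ : ℝ) / (n + 1)}
        ∩ {ω : Ω | ∀ k : Fin i, pval n S k ω = (j k : ℝ) / (n + 1)}) ↔ qf τ) := by
    intro τ ω hω
    rw [Set.mem_inter_iff]
    have hex1 : ω ∈ {ω : Ω | ∃ ℓ ∈ I, pval n S i ω = (ℓ : ℝ) / (n + 1)}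
        ↔ (1 + CPG.cnt n τ.symm (Fin.last (n + i))) ∈ I := by
      simp only [Set.mem_setOf_eq]
      constructor
      · rintro ⟨ℓ, hℓ, heq⟩
        have h5 := (CPG.pval_cond hω hn_le hki ℓ).mp heq
        rw [hlast, h5]
        exact hℓ
      · intro hmem
        refine ⟨1 + CPG.cnt n τ.symm (Fin.last (n + i)), hmem, ?_⟩
        exact (CPG.pval_cond hω hn_le hki _).mpr (by rw [hlast])
    show _ ↔ (_ ∧ _)
    constructor
    · rintro ⟨h1, h2⟩
      exact ⟨(hdet_p τ ω hω).mp h2, hex1.mp h1⟩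
    · rintro ⟨h1, h2⟩
      exact ⟨hex1.mpr h2, (hdet_p τ ω hω).mpr h1⟩
  have hPp := CPG.measure_eq_count P (n + m) S hS hex hnt (n + i + 1) hMN
    _ hApastm qp hdet_p
  have hPf := CPG.measure_eq_count P (n + m) S hS hex hnt (n + i + 1) hMN
    _ (hAexm.inter hApastm) qf hdet_f
  have hcp : (Finset.univ.filter qp).card
      = (n + i + 1) * (Finset.univ.filter (CPG.pastQ n i j)).card := by
    have h1 : (Finset.univ.filter qp).card = (Finset.univ.filter
        (fun ρ : Equiv.Perm (Fin (n + i + 1)) =>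
          ∀ k : Fin i, 1 + CPG.cnt n ρ (CPG.tixM n i k) = j k)).card :=
      CPG.card_filter_symm (fun ρ : Equiv.Perm (Fin (n + i + 1)) =>
        ∀ k : Fin i, 1 + CPG.cnt n ρ (CPG.tixM n i k) = j k)
    rw [h1, CPG.count_past n i j]
  have hcf : (Finset.univ.filter qf).card
      = (I.card + (Finset.univ.filter (fun k : Fin i => j k ∈ I)).card)
          * (Finset.univ.filter (CPG.pastQ n i j)).card := by
    have h1 : (Finset.univ.filter qf).card = (Finset.univ.filter
        (fun ρ : Equiv.Perm (Fin (n + i + 1)) =>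
          (∀ k : Fin i, 1 + CPG.cnt n ρ (CPG.tixM n i k) = j k)
            ∧ (1 + CPG.cnt n ρ (Fin.last (n + i))) ∈ I)).card :=
      CPG.card_filter_symm (fun ρ : Equiv.Perm (Fin (n + i + 1)) =>
        (∀ k : Fin i, 1 + CPG.cnt n ρ (CPG.tixM n i k) = j k)
          ∧ (1 + CPG.cnt n ρ (Fin.last (n + i))) ∈ I)
    rw [h1, CPG.count_full n i j I hI]
  rw [hPf, hPp, hcf, hcp]
  rw [ENNReal.toReal_mul, ENNReal.toReal_mul, ENNReal.toReal_inv]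
  simp only [ENNReal.toReal_natCast]
  have hfact : (0 : ℝ) < ((n + i + 1).factorial : ℝ) :=
    Nat.cast_pos.mpr (Nat.factorial_pos _)
  have hden : ((n : ℝ) + 1 + (i : ℝ)) ≠ 0 := by positivity
  push_cast
  field_simp
  ring
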